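/- If ζ : ℕ → ℝ≥0 satisfies ζ(r) ≤ C(r+1)^{-(n+1)} for some n > 1 and C > 0, then there is a constant C'' such that for all L ≥ 1, min over 1 ≤ d ≤ L of (d²/L + Σ_{k ≥ d} ζ(k)) ≤ C'' L^{-n/(n+2)}. -/

import Mathlib

open Real Finset

lemma per_term (n : ℝ) (hn : 1 < n) (a : ℝ) (ha : 1 ≤ a) :
    n * (a + 1) ^ (-(n + 1)) ≤ a ^ (-n) - (a + 1) ^ (-n) := by
  have ha0 : 0 < a := lt_of_lt_of_le one_pos ha
  have hb0 : (0:ℝ) < a + 1 := by linarith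
  have key : a + 1 + n ≤ a ^ (-n) * (a + 1) ^ (n + 1) := by
    have h1 : a + 1 + n ≤ (1 + n / a) * (a + 1) := by
      have : n ≤ (n / a) * (a + 1) := by
        rw [div_mul_eq_mul_div, le_div_iff₀ ha0]
        nlinarith
      nlinarith
    have h2 : (1 + n / a) ≤ (1 + 1 / a) ^ n := by
      have hsn : (-1:ℝ) ≤ 1/a := by
        have : (0:ℝ) ≤ 1/a := by positivity
        linarith
      have := one_add_mul_self_le_rpow_one_add hsn hn.le
      calc 1 + n / a = 1 + n * (1/a) := by ring
        _ ≤ (1 + 1/a) ^ n := this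
    have h3 : (1 + 1 / a) ^ n * (a + 1) = a ^ (-n) * (a + 1) ^ (n + 1) := by
      have : (1 + 1 / a) = (a+1) / a := by field_simp
      rw [this, Real.div_rpow hb0.le ha0.le, Real.rpow_neg ha0.le,
        Real.rpow_add_one hb0.ne']
      field_simp
    calc a + 1 + n ≤ (1 + n / a) * (a + 1) := h1
      _ ≤ (1 + 1/a) ^ n * (a + 1) := by nlinarith
      _ = a ^ (-n) * (a + 1) ^ (n + 1) := h3
  have hbp : (0:ℝ) < (a + 1) ^ (-(n+1)) := Real.rpow_pos_of_pos hb0 _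
  have e1 : (a + 1 + n) * (a + 1) ^ (-(n+1)) = (a+1) ^ (-n) + n * (a+1) ^ (-(n+1)) := by
    have : (a+1) * (a+1) ^ (-(n+1)) = (a+1) ^ (-n) := by
      rw [mul_comm, ← Real.rpow_add_one hb0.ne']
      ring_nf
    nlinarith [this]
  have e2 : (a ^ (-n) * (a + 1) ^ (n + 1)) * (a + 1) ^ (-(n+1)) = a ^ (-n) := by
    rw [mul_assoc, ← Real.rpow_add hb0,
      show n + 1 + -(n+1) = 0 by ring, Real.rpow_zero, mul_one]
  nlinarith [mul_le_mul_of_nonneg_right key hbp.le]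

lemma tail_bound (n : ℝ) (hn : 1 < n) (d : ℕ) (hd : 1 ≤ d) :
    ∑' k : ℕ, ((d : ℝ) + k + 1) ^ (-(n + 1)) ≤ (d : ℝ) ^ (-n) / n := by
  have hn0 : 0 < n := lt_trans one_pos hn
  have hd1 : (1:ℝ) ≤ (d:ℝ) := by exact_mod_cast hd
  have hnonneg : ∀ k : ℕ, (0:ℝ) ≤ ((d : ℝ) + k + 1) ^ (-(n + 1)) := by
    intro k
    positivity
  rw [le_div_iff₀ hn0, ← tsum_mul_right]
  apply Real.tsum_le_of_sum_range_le (fun k => by positivity)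
  intro N
  set h : ℕ → ℝ := fun k => ((d : ℝ) + k) ^ (-n) with hh
  have step : ∀ k ∈ Finset.range N,
      ((d : ℝ) + k + 1) ^ (-(n + 1)) * n ≤ h k - h (k + 1) := by
    intro k _
    have hak : (1:ℝ) ≤ (d:ℝ) + k := by
      have : (0:ℝ) ≤ (k:ℝ) := k.cast_nonneg
      linarith
    have := per_term n hn ((d:ℝ) + k) hak
    simp only [hh]
    push_cast
    rw [show ((d:ℝ) + ((k:ℝ)+1)) = (d:ℝ)+(k:ℝ)+1 by ring]
    linarith
  calc ∑ k ∈ Finset.range N, ((d : ℝ) + k + 1) ^ (-(n + 1)) * n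
      ≤ ∑ k ∈ Finset.range N, (h k - h (k + 1)) := Finset.sum_le_sum step
    _ = h 0 - h N := Finset.sum_range_sub' h N
    _ ≤ h 0 := by
        have : (0:ℝ) ≤ h N := by simp only [hh]; positivity
        linarith
    _ = (d : ℝ) ^ (-n) := by simp [hh]

/-- If `ζ(r) ≤ C(r+1)^{-(n+1)}` for some `n > 1` and `C > 0`, then there
is `C''` such that for all `L ≥ 1`,
`min_{1 ≤ d ≤ L} (d²/L + Σ_{k ≥ d} ζ(k)) ≤ C'' L^{-n/(n+2)}`. -/
theorem min_bound_polynomial_decay (n C : ℝ) (hn : 1 < n) (hC : 0 < C)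
    (ζ : ℕ → ℝ) (hnonneg : ∀ r, 0 ≤ ζ r)
    (hdecay : ∀ r : ℕ, ζ r ≤ C * ((r : ℝ) + 1) ^ (-(n + 1))) :
    ∃ C'' : ℝ, ∀ L : ℕ, 1 ≤ L →
      sInf ((fun d : ℕ => (d : ℝ) ^ 2 / L + ∑' k : ℕ, ζ (d + k)) '' Set.Icc 1 L) ≤
        C'' * (L : ℝ) ^ (-(n / (n + 2))) := by
  have hn0 : (0:ℝ) < n := lt_trans one_pos hn
  have hn2 : (0:ℝ) < n + 2 := by linarith
  refine ⟨4 + C / n, fun L hL => ?_⟩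
  have hL1 : (1:ℝ) ≤ (L:ℝ) := by exact_mod_cast hL
  have hL0 : (0:ℝ) < (L:ℝ) := lt_of_lt_of_le one_pos hL1
  set x : ℝ := (L:ℝ) ^ ((n+2)⁻¹) with hx
  have hx1 : (1:ℝ) ≤ x := Real.one_le_rpow hL1 (by positivity)
  have hx0 : (0:ℝ) < x := lt_of_lt_of_le one_pos hx1
  set d : ℕ := ⌈x⌉₊ with hdd
  have hd1 : 1 ≤ d := Nat.one_le_ceil_iff.mpr hx0
  have hxd : x ≤ (d:ℝ) := Nat.le_ceil x
  have hdx : (d:ℝ) ≤ 2 * x := by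
    have := Nat.ceil_lt_add_one hx0.le
    calc (d:ℝ) ≤ x + 1 := le_of_lt this
      _ ≤ 2 * x := by linarith
  have hdL : d ≤ L := by
    apply Nat.ceil_le.mpr
    calc x ≤ (L:ℝ) ^ (1:ℝ) :=
          Real.rpow_le_rpow_of_exponent_le hL1 (by
            rw [inv_le_one_iff₀]; right; linarith)
      _ = (L:ℝ) := Real.rpow_one _
  -- the key value T
  set T : ℝ := (L:ℝ) ^ (-(n / (n + 2))) with hT
  have hT0 : 0 < T := Real.rpow_pos_of_pos hL0 _
  -- summability facts
  have hsum1 : Summable (fun k : ℕ => ((k:ℝ) + 1) ^ (-(n+1))) := by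
    have hbase : Summable (fun k : ℕ => (k:ℝ) ^ (-(n+1))) :=
      Real.summable_nat_rpow.mpr (by linarith)
    have := (summable_nat_add_iff 1).mpr hbase
    convert this using 2 with k
    · rfl
    push_cast
    rfl
  have hsumd : Summable (fun k : ℕ => ((d:ℝ) + k + 1) ^ (-(n+1))) := by
    apply Summable.of_nonneg_of_le (fun k => by positivity) _ hsum1
    intro k
    apply Real.rpow_le_rpow_of_nonpos (by positivity)
      (by have : (0:ℝ) ≤ (d:ℝ) := d.cast_nonneg; linarith) (by linarith)
  have hsumz : Summable (fun k : ℕ => ζ (d + k)) := by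
    apply Summable.of_nonneg_of_le (fun k => hnonneg _) _ (hsumd.mul_left C)
    intro k
    calc ζ (d + k) ≤ C * (((d+k:ℕ):ℝ) + 1) ^ (-(n+1)) := hdecay _
      _ = C * ((d:ℝ) + k + 1) ^ (-(n+1)) := by push_cast; ring_nf
  -- bound tsum
  have htail : ∑' k : ℕ, ζ (d + k) ≤ C * ((d:ℝ) ^ (-n) / n) := by
    calc ∑' k : ℕ, ζ (d + k) ≤ ∑' k : ℕ, C * ((d:ℝ) + k + 1) ^ (-(n+1)) := by
          apply Summable.tsum_le_tsum _ hsumz (hsumd.mul_left C)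
          intro k
          calc ζ (d + k) ≤ C * (((d+k:ℕ):ℝ) + 1) ^ (-(n+1)) := hdecay _
            _ = C * ((d:ℝ) + k + 1) ^ (-(n+1)) := by push_cast; ring_nf
      _ = C * ∑' k : ℕ, ((d:ℝ) + k + 1) ^ (-(n+1)) := tsum_mul_left
      _ ≤ C * ((d:ℝ) ^ (-n) / n) := by
          have := tail_bound n hn d hd1
          nlinarith
  -- bound d^2/L
  have hsq : (d:ℝ) ^ 2 / L ≤ 4 * T := by
    have h1 : (d:ℝ)^2 ≤ 4 * x^2 := by nlinarith
    have h2 : x^2 = (L:ℝ) ^ (2 * (n+2)⁻¹) := by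
      rw [hx, ← Real.rpow_natCast ((L:ℝ) ^ ((n+2)⁻¹)) 2, ← Real.rpow_mul hL0.le]
      norm_num
      ring_nf
    have h3 : (L:ℝ) ^ (2 * (n+2)⁻¹) / (L:ℝ) = T := by
      rw [hT, div_eq_iff hL0.ne']
      calc (L:ℝ) ^ (2 * (n+2)⁻¹) = (L:ℝ) ^ (-(n/(n+2)) + 1) := by
            congr 1
            field_simp
            ring
        _ = (L:ℝ) ^ (-(n/(n+2))) * (L:ℝ) ^ (1:ℝ) := Real.rpow_add hL0 _ _
        _ = (L:ℝ) ^ (-(n/(n+2))) * (L:ℝ) := by rw [Real.rpow_one]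
    calc (d:ℝ)^2 / L ≤ 4 * x^2 / L := by
          apply div_le_div_of_nonneg_right h1 hL0.le |>.trans_eq (by ring)
      _ = 4 * ((L:ℝ) ^ (2 * (n+2)⁻¹) / L) := by rw [h2]; ring
      _ = 4 * T := by rw [h3]
  -- bound d^{-n}
  have hdn : (d:ℝ) ^ (-n) ≤ T := by
    calc (d:ℝ) ^ (-n) ≤ x ^ (-n) :=
          Real.rpow_le_rpow_of_nonpos hx0 hxd (by linarith)
      _ = T := by
          rw [hx, hT, ← Real.rpow_mul hL0.le]
          congr 1
          field_simp
  -- combine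
  have hmem : (d:ℝ) ^ 2 / L + ∑' k : ℕ, ζ (d + k) ∈
      ((fun d : ℕ => (d : ℝ) ^ 2 / L + ∑' k : ℕ, ζ (d + k)) '' Set.Icc 1 L) :=
    ⟨d, ⟨hd1, hdL⟩, rfl⟩
  have hbdd : BddBelow ((fun d : ℕ => (d : ℝ) ^ 2 / L + ∑' k : ℕ, ζ (d + k)) '' Set.Icc 1 L) := by
    refine ⟨0, fun y hy => ?_⟩
    obtain ⟨e, _, rfl⟩ := hy
    have h1 : (0:ℝ) ≤ (e:ℝ)^2 / L := by positivity
    have h2 : (0:ℝ) ≤ ∑' k : ℕ, ζ (e + k) := tsum_nonneg (fun k => hnonneg _)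
    linarith
  calc sInf _ ≤ (d:ℝ) ^ 2 / L + ∑' k : ℕ, ζ (d + k) := csInf_le hbdd hmem
    _ ≤ 4 * T + C * ((d:ℝ) ^ (-n) / n) := by linarith
    _ ≤ 4 * T + (C / n) * T := by
        have e : C * ((d:ℝ)^(-n)/n) = (C/n) * (d:ℝ)^(-n) := by ring
        have h := mul_le_mul_of_nonneg_left hdn (by positivity : (0:ℝ) ≤ C/n)
        linarith
    _ = (4 + C / n) * T := by ring
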